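/- Let μ ∈ (0,1]. In ℝ⁹ with standard inner product, consider the four vectors f₁ = e_{1,0} − μ·e_{0,1}, f₂ = e_{1,−1} − (μ/2)·e_{0,0}, f₃ = (1/2)·e_{0,0} − μ·e_{−1,1}, f₄ = e_{0,−1} − μ·e_{−1,0}, and the five vectors g₂ = e_{1,1}, g₁ = μ·e_{1,0} + e_{0,1}, g₀ = μ²·e_{1,−1} + 2μ·e_{0,0} + e_{−1,1}, g₋₁ = μ·e_{0,−1} + e_{−1,0}, g₋₂ = e_{−1,−1}. Then ⟨g_m, f_i⟩ = 0 for all m ∈ {2,1,0,−1,−2} and i ∈ {1,2,3,4}, and the nine vectors f₁,…,f₄, g₂,…,g₋₂ together form a basis of ℝ⁹. -/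

import Mathlib

open Matrix

/-- The standard basis vector `e_{m,m'} = |m⟩⊗|m'⟩` of the two-site Hilbert space
`ℝ⁹ ≅ ℝ³⊗ℝ³` of a pair of spin-1's, where the index `0, 1, 2 : Fin 3` encodes
`m = 1, 0, −1` respectively. -/
def e (a b : Fin 3) : Fin 3 × Fin 3 → ℝ := fun p => if p = (a, b) then 1 else 0

/-- The family consisting of the four two-site ground states
`f₁ = e_{1,0} − μ·e_{0,1}`, `f₂ = e_{1,−1} − (μ/2)·e_{0,0}`,
`f₃ = (1/2)·e_{0,0} − μ·e_{−1,1}`, `f₄ = e_{0,−1} − μ·e_{−1,0}` of the S=1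
asymmetric VBS model followed by the five Witten-conjugated `S_tot = 2` vectors
`g₂ = e_{1,1}`, `g₁ = μ·e_{1,0} + e_{0,1}`, `g₀ = μ²·e_{1,−1} + 2μ·e_{0,0} + e_{−1,1}`,
`g₋₁ = μ·e_{0,−1} + e_{−1,0}`, `g₋₂ = e_{−1,−1}`. -/
noncomputable def fam (μ : ℝ) : Fin 9 → (Fin 3 × Fin 3 → ℝ) :=
  ![e 0 1 - μ • e 1 0,
    e 0 2 - (μ / 2) • e 1 1,
    (1 / 2 : ℝ) • e 1 1 - μ • e 2 0,
    e 1 2 - μ • e 2 1,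
    e 0 0,
    μ • e 0 1 + e 1 0,
    (μ ^ 2) • e 0 2 + (2 * μ) • e 1 1 + e 2 0,
    μ • e 1 2 + e 2 1,
    e 2 2]

lemma fam_zero (μ : ℝ) : fam μ 0 = e 0 1 - μ • e 1 0 := rfl
lemma fam_one (μ : ℝ) : fam μ 1 = e 0 2 - (μ / 2) • e 1 1 := rfl
lemma fam_two (μ : ℝ) : fam μ 2 = (1 / 2 : ℝ) • e 1 1 - μ • e 2 0 := rfl
lemma fam_three (μ : ℝ) : fam μ 3 = e 1 2 - μ • e 2 1 := rfl
lemma fam_four (μ : ℝ) : fam μ 4 = e 0 0 := rfl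
lemma fam_five (μ : ℝ) : fam μ 5 = μ • e 0 1 + e 1 0 := rfl
lemma fam_six (μ : ℝ) : fam μ 6 = (μ ^ 2) • e 0 2 + (2 * μ) • e 1 1 + e 2 0 := rfl
lemma fam_seven (μ : ℝ) : fam μ 7 = μ • e 1 2 + e 2 1 := rfl
lemma fam_eight (μ : ℝ) : fam μ 8 = e 2 2 := rfl

set_option maxHeartbeats 2000000 in
lemma ortho_aux (μ : ℝ) : ∀ i : Fin 9, ∀ j : Fin 9, 4 ≤ (i : ℕ) → (j : ℕ) < 4 →
    fam μ i ⬝ᵥ fam μ j = 0 := by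
  intro i j hi hj
  fin_cases i <;> fin_cases j <;>
    first
      | exact absurd hi (by decide)
      | exact absurd hj (by decide)
      | (simp [dotProduct, fam_zero, fam_one, fam_two, fam_three, fam_four, fam_five,
          fam_six, fam_seven, fam_eight, e,
          Fintype.sum_prod_type, Fin.sum_univ_succ, Prod.mk.injEq,
          -Prod.mk_zero_zero, -Prod.mk_one_one] <;> ring)

set_option maxHeartbeats 2000000 in
lemma li_aux (μ : ℝ) (hμ : 0 < μ) : LinearIndependent ℝ (fam μ) := by
  rw [Fintype.linearIndependent_iff]
  intro g hg
  have h : ∀ p : Fin 3 × Fin 3, (∑ i : Fin 9, g i • fam μ i) p = 0 := by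
    intro p; rw [hg]; rfl
  simp only [fam, e, Fin.sum_univ_succ, Finset.sum_empty, Fin.sum_univ_zero,
    Matrix.cons_val_zero, Matrix.cons_val_succ, Pi.add_apply, Pi.sub_apply,
    Pi.smul_apply, smul_eq_mul, Pi.zero_apply] at h
  have h00 := h (0, 0)
  have h01 := h (0, 1)
  have h02 := h (0, 2)
  have h10 := h (1, 0)
  have h11 := h (1, 1)
  have h12 := h (1, 2)
  have h20 := h (2, 0)
  have h21 := h (2, 1)
  have h22 := h (2, 2)
  simp only [Prod.mk.injEq, if_pos, if_neg, Fin.ext_iff, Fin.val_zero, Fin.val_one,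
    Fin.val_two] at h00 h01 h02 h10 h11 h12 h20 h21 h22
  norm_num at h00 h01 h02 h10 h11 h12 h20 h21 h22
  have H00 : g 4 = 0 := h00
  have H01 : g 0 + g 5 * μ = 0 := h01
  have H02 : g 1 + g 6 * μ ^ 2 = 0 := h02
  have H10 : -(g 0 * μ) + g 5 = 0 := h10
  have H11 : -(g 1 * (μ / 2)) + (g 2 * (1 / 2) + g 6 * (2 * μ)) = 0 := h11
  have H12 : g 3 + g 7 * μ = 0 := h12
  have H20 : -(g 2 * μ) + g 6 = 0 := h20
  have H21 : -(g 3 * μ) + g 7 = 0 := h21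
  have H22 : g 8 = 0 := h22
  have k0 : g 0 * (1 + μ ^ 2) = 0 := by linear_combination H01 - μ * H10
  have hg0 : g 0 = 0 := (mul_eq_zero.mp k0).resolve_right (by positivity)
  have hg5 : g 5 = 0 := by linear_combination H10 + μ * hg0
  have k2 : g 2 * (μ ^ 4 + 4 * μ ^ 2 + 1) = 0 := by
    linear_combination 2 * H11 + μ * H02 - (4 * μ + μ ^ 3) * H20
  have hg2 : g 2 = 0 := (mul_eq_zero.mp k2).resolve_right (by positivity)
  have hg6 : g 6 = 0 := by linear_combination H20 + μ * hg2
  have hg1 : g 1 = 0 := by linear_combination H02 - μ ^ 2 * hg6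
  have k3 : g 3 * (1 + μ ^ 2) = 0 := by linear_combination H12 - μ * H21
  have hg3 : g 3 = 0 := (mul_eq_zero.mp k3).resolve_right (by positivity)
  have hg7 : g 7 = 0 := by linear_combination H21 + μ * hg3
  intro i
  fin_cases i
  · exact hg0
  · exact hg1
  · exact hg2
  · exact hg3
  · exact H00
  · exact hg5
  · exact hg6
  · exact hg7
  · exact H22

/-- For `μ ∈ (0,1]`: each `g_m` is orthogonal to each `f_i`, and the nine vectors
`f₁,…,f₄, g₂,…,g₋₂` together form a basis of `ℝ⁹`. -/
theorem witten_conjugated_orthogonal_basis (μ : ℝ) (hμ : 0 < μ) (hμ' : μ ≤ 1) :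
    (∀ i : Fin 9, ∀ j : Fin 9, 4 ≤ (i : ℕ) → (j : ℕ) < 4 →
      fam μ i ⬝ᵥ fam μ j = 0) ∧
    LinearIndependent ℝ (fam μ) ∧
    Submodule.span ℝ (Set.range (fam μ)) = ⊤ := by
  have hli := li_aux μ hμ
  refine ⟨ortho_aux μ, hli, ?_⟩
  have hcard : Fintype.card (Fin 9) = Module.finrank ℝ (Fin 3 × Fin 3 → ℝ) := by simp
  have hspan := (basisOfLinearIndependentOfCardEqFinrank hli hcard).span_eq
  rwa [coe_basisOfLinearIndependentOfCardEqFinrank] at hspan
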